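/- Let A be a Banach algebra (or the algebra of bounded operators on a Hilbert space) and let a, b ∈ A satisfy a² = 0 and b² = 0. Then the exponential of a − b admits the closed form exp(a − b) = 1 + Σ_{m≥1} (−1)^m (ba)^m/(2m)! + a·Σ_{m≥0} (−1)^m (ba)^m/(2m+1)! − (Σ_{m≥0} (−1)^m (ba)^m/(2m+1)!)·b + a·(Σ_{m≥1} (−1)^m (ba)^{m−1}/(2m)!)·b. Equivalently, writing formally X = √(ba), exp(a−b) = cos X + a·(sin X)/X − (sin X)/X·b + a·((cos X − 1)/X²)·b. -/

import Mathlib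

private lemma pow_mul_comm_aux {A : Type*} [Ring A] (a b : A) (m : ℕ) :
    a * (b * a) ^ m = (a * b) ^ m * a := by
  induction m with
  | zero => simp
  | succ m ih =>
    rw [pow_succ, ← mul_assoc, ih, pow_succ]
    simp [mul_assoc]

private lemma aux_a_pow_a {A : Type*} [Ring A] (a b : A) (ha : a ^ 2 = 0) (m : ℕ) :
    a * (b * a) ^ m * a = 0 := by
  rw [pow_mul_comm_aux, mul_assoc, ← sq, ha, mul_zero]

private lemma aux_pow_b_b {A : Type*} [Ring A] (a b : A) (hb : b ^ 2 = 0) (m : ℕ) :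
    (b * a) ^ m * b * b = 0 := by
  rw [mul_assoc, ← sq, hb, mul_zero]

private lemma aux_a_pow_b {A : Type*} [Ring A] (a b : A) (m : ℕ) :
    a * (b * a) ^ m * b = (a * b) ^ (m + 1) := by
  rw [pow_mul_comm_aux, pow_succ, mul_assoc]

private lemma aux_pow_b_a {A : Type*} [Ring A] (a b : A) (m : ℕ) :
    (b * a) ^ m * b * a = (b * a) ^ (m + 1) := by
  rw [pow_succ, mul_assoc]

private lemma aux_ab_pow_b {A : Type*} [Ring A] (a b : A) (hb : b ^ 2 = 0) (m : ℕ) :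
    (a * b) ^ (m + 1) * b = 0 := by
  rw [← aux_a_pow_b, mul_assoc (a * (b * a) ^ m), ← sq, hb, mul_zero]

private lemma odd_pow {A : Type*} [Ring A] [Algebra ℝ A] (a b : A)
    (ha : a ^ 2 = 0) (hb : b ^ 2 = 0) (m : ℕ) :
    (a - b) ^ (2 * m + 1) =
      ((-1 : ℝ) ^ m) • (a * (b * a) ^ m - (b * a) ^ m * b) := by
  induction m with
  | zero => simp
  | succ m ih =>
    have heven : (a - b) ^ (2 * m + 2) =
        ((-1 : ℝ) ^ (m + 1)) • ((a * b) ^ (m + 1) + (b * a) ^ (m + 1)) := by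
      have e : 2 * m + 2 = (2 * m + 1) + 1 := by omega
      rw [e, pow_succ, ih, smul_mul_assoc, sub_mul, mul_sub, mul_sub,
        aux_a_pow_a a b ha, aux_a_pow_b, aux_pow_b_a, aux_pow_b_b a b hb]
      module
    have e : 2 * (m + 1) + 1 = (2 * m + 2) + 1 := by omega
    rw [e, pow_succ, heven, smul_mul_assoc, add_mul, mul_sub, mul_sub,
      ← pow_mul_comm_aux, aux_ab_pow_b a b hb, aux_ab_pow_b b a ha]
    congr 1
    abel

private lemma even_pow {A : Type*} [Ring A] [Algebra ℝ A] (a b : A)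
    (ha : a ^ 2 = 0) (hb : b ^ 2 = 0) (m : ℕ) :
    (a - b) ^ (2 * (m + 1)) =
      ((-1 : ℝ) ^ (m + 1)) • ((a * b) ^ (m + 1) + (b * a) ^ (m + 1)) := by
  have e : 2 * (m + 1) = (2 * m + 1) + 1 := by omega
  rw [e, pow_succ, odd_pow a b ha hb, smul_mul_assoc, sub_mul, mul_sub, mul_sub,
    aux_a_pow_a a b ha, aux_a_pow_b, aux_pow_b_a, aux_pow_b_b a b hb]
  module

private lemma summable_coeff_pow {A : Type*} [NormedRing A] [NormedAlgebra ℝ A]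
    [CompleteSpace A] (y : A) (c : ℕ → ℝ)
    (hc : ∀ m, |c m| ≤ ((m.factorial : ℝ))⁻¹) :
    Summable (fun m => c m • y ^ m) := by
  refine Summable.of_norm_bounded (NormedSpace.norm_expSeries_summable' (𝕂 := ℝ) y) ?_
  intro m
  calc ‖c m • y ^ m‖ = |c m| * ‖y ^ m‖ := by rw [norm_smul, Real.norm_eq_abs]
    _ ≤ ((m.factorial : ℝ))⁻¹ * ‖y ^ m‖ :=
        mul_le_mul_of_nonneg_right (hc m) (norm_nonneg _)
    _ = ‖((m.factorial : ℝ))⁻¹ • y ^ m‖ := by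
        rw [norm_smul, Real.norm_eq_abs, abs_of_nonneg (by positivity)]

private lemma summable_coeff_pow_succ {A : Type*} [NormedRing A] [NormedAlgebra ℝ A]
    [CompleteSpace A] (y : A) (c : ℕ → ℝ)
    (hc : ∀ m, |c m| ≤ (((m + 1).factorial : ℝ))⁻¹) :
    Summable (fun m => c m • y ^ (m + 1)) := by
  have h0 : Summable (fun n : ℕ => ‖(((n + 1).factorial : ℝ))⁻¹ • y ^ (n + 1)‖) :=
    (summable_nat_add_iff 1).2 (NormedSpace.norm_expSeries_summable' (𝕂 := ℝ) y)
  refine Summable.of_norm_bounded h0 ?_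
  intro m
  calc ‖c m • y ^ (m + 1)‖ = |c m| * ‖y ^ (m + 1)‖ := by rw [norm_smul, Real.norm_eq_abs]
    _ ≤ (((m + 1).factorial : ℝ))⁻¹ * ‖y ^ (m + 1)‖ :=
        mul_le_mul_of_nonneg_right (hc m) (norm_nonneg _)
    _ = ‖(((m + 1).factorial : ℝ))⁻¹ • y ^ (m + 1)‖ := by
        rw [norm_smul, Real.norm_eq_abs, abs_of_nonneg (by positivity)]

private lemma abs_coeff_le (k n j : ℕ) (h : j ≤ n) :
    |(-1 : ℝ) ^ k / (n.factorial : ℝ)| ≤ ((j.factorial : ℝ))⁻¹ := by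
  rw [abs_div, abs_pow, abs_neg, abs_one, one_pow, one_div,
    abs_of_nonneg (by positivity : (0:ℝ) ≤ (n.factorial : ℝ))]
  gcongr

set_option maxHeartbeats 1000000 in
open NormedSpace in
theorem exp_of_square_zero_pair {A : Type*} [NormedRing A] [NormedAlgebra ℝ A]
    [CompleteSpace A] (a b : A) (ha : a ^ 2 = 0) (hb : b ^ 2 = 0) :
    exp (a - b) =
      1 + (∑' m : ℕ, (((-1 : ℝ) ^ (m + 1) / ((2 * (m + 1)).factorial : ℝ)) • (b * a) ^ (m + 1)))
        + a * (∑' m : ℕ, (((-1 : ℝ) ^ m / ((2 * m + 1).factorial : ℝ)) • (b * a) ^ m))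
        - (∑' m : ℕ, (((-1 : ℝ) ^ m / ((2 * m + 1).factorial : ℝ)) • (b * a) ^ m)) * b
        + a * (∑' m : ℕ, (((-1 : ℝ) ^ (m + 1) / ((2 * (m + 1)).factorial : ℝ)) • (b * a) ^ m)) * b := by
  have hf : Summable (fun n : ℕ => ((n.factorial : ℝ))⁻¹ • (a - b) ^ n) :=
    expSeries_summable' (𝕂 := ℝ) (a - b)
  have he : Summable (fun k : ℕ => (((2 * k).factorial : ℝ))⁻¹ • (a - b) ^ (2 * k)) :=
    hf.comp_injective fun p q hpq => by omega
  have ho : Summable (fun k : ℕ => (((2 * k + 1).factorial : ℝ))⁻¹ • (a - b) ^ (2 * k + 1)) :=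
    hf.comp_injective fun p q hpq => by omega
  have hS1 : Summable (fun m : ℕ =>
      ((-1 : ℝ) ^ (m + 1) / ((2 * (m + 1)).factorial : ℝ)) • (b * a) ^ (m + 1)) :=
    summable_coeff_pow_succ _ _ fun m => abs_coeff_le _ _ _ (by omega)
  have hS2 : Summable (fun m : ℕ =>
      ((-1 : ℝ) ^ m / ((2 * m + 1).factorial : ℝ)) • (b * a) ^ m) :=
    summable_coeff_pow _ _ fun m => abs_coeff_le _ _ _ (by omega)
  have hS3 : Summable (fun m : ℕ =>
      ((-1 : ℝ) ^ (m + 1) / ((2 * (m + 1)).factorial : ℝ)) • (b * a) ^ m) :=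
    summable_coeff_pow _ _ fun m => abs_coeff_le _ _ _ (by omega)
  have heven_sum : (∑' k : ℕ, (((2 * k).factorial : ℝ))⁻¹ • (a - b) ^ (2 * k)) =
      1 + (∑' m : ℕ, (((-1 : ℝ) ^ (m + 1) / ((2 * (m + 1)).factorial : ℝ)) • (b * a) ^ (m + 1)))
        + a * (∑' m : ℕ, (((-1 : ℝ) ^ (m + 1) / ((2 * (m + 1)).factorial : ℝ)) • (b * a) ^ m)) * b := by
    have hterm : ∀ k : ℕ, (((2 * (k + 1)).factorial : ℝ))⁻¹ • (a - b) ^ (2 * (k + 1)) =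
        a * (((-1 : ℝ) ^ (k + 1) / ((2 * (k + 1)).factorial : ℝ)) • (b * a) ^ k) * b
          + ((-1 : ℝ) ^ (k + 1) / ((2 * (k + 1)).factorial : ℝ)) • (b * a) ^ (k + 1) := by
      intro k
      rw [even_pow a b ha hb k, smul_smul, inv_mul_eq_div, smul_add,
        mul_smul_comm, smul_mul_assoc, aux_a_pow_b]
    rw [Summable.tsum_eq_zero_add he]
    have h0 : (((2 * 0).factorial : ℝ))⁻¹ • (a - b) ^ (2 * 0) = 1 := by simp
    rw [h0, tsum_congr hterm, Summable.tsum_add ((hS3.mul_left a).mul_right b) hS1,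
      (hS3.mul_left a).tsum_mul_right b, hS3.tsum_mul_left a]
    abel
  have hodd_sum : (∑' k : ℕ, (((2 * k + 1).factorial : ℝ))⁻¹ • (a - b) ^ (2 * k + 1)) =
      a * (∑' m : ℕ, (((-1 : ℝ) ^ m / ((2 * m + 1).factorial : ℝ)) • (b * a) ^ m))
        - (∑' m : ℕ, (((-1 : ℝ) ^ m / ((2 * m + 1).factorial : ℝ)) • (b * a) ^ m)) * b := by
    have hterm : ∀ k : ℕ, (((2 * k + 1).factorial : ℝ))⁻¹ • (a - b) ^ (2 * k + 1) =
        a * (((-1 : ℝ) ^ k / ((2 * k + 1).factorial : ℝ)) • (b * a) ^ k)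
          - (((-1 : ℝ) ^ k / ((2 * k + 1).factorial : ℝ)) • (b * a) ^ k) * b := by
      intro k
      rw [odd_pow a b ha hb k, smul_smul, inv_mul_eq_div, smul_sub,
        mul_smul_comm, smul_mul_assoc]
    rw [tsum_congr hterm, Summable.tsum_sub (hS2.mul_left a) (hS2.mul_right b),
      hS2.tsum_mul_left a, hS2.tsum_mul_right b]
  calc exp (a - b) = ∑' n : ℕ, ((n.factorial : ℝ))⁻¹ • (a - b) ^ n := by rw [exp_eq_tsum (𝕂 := ℝ)]
    _ = (∑' k : ℕ, (((2 * k).factorial : ℝ))⁻¹ • (a - b) ^ (2 * k))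
        + (∑' k : ℕ, (((2 * k + 1).factorial : ℝ))⁻¹ • (a - b) ^ (2 * k + 1)) :=
      (tsum_even_add_odd he ho).symm
    _ = _ := by rw [heven_sum, hodd_sum]; abel
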